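/- Suppose w ∈ W and w(R₁) = R₁. Then (ρ′, Σ_{α ∈ Q(w)} α) ≥ 0, with equality if and only if w(B₁) = B₁. -/

import Mathlib

open scoped Classical RealInnerProductSpace

private lemma aux_coeff {V : Type*} [NormedAddCommGroup V] [InnerProductSpace ℝ V]
    (B : Finset V)
    (hBindep : LinearIndependent ℝ (Subtype.val : {x : V // x ∈ B} → V))
    (c d : V → ℝ) (h : ∑ b ∈ B, c b • b = ∑ b ∈ B, d b • b) :
    ∀ b ∈ B, c b = d b := by
  have h0 : ∑ i : {x // x ∈ B}, (c i.1 - d i.1) • (i.1 : V) = 0 := by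
    rw [Finset.univ_eq_attach]
    have e : ∑ i ∈ B.attach, (c i.1 - d i.1) • (i.1 : V)
        = ∑ i ∈ B.attach, c i.1 • (i.1 : V) - ∑ i ∈ B.attach, d i.1 • (i.1 : V) := by
      rw [← Finset.sum_sub_distrib]
      exact Finset.sum_congr rfl (fun i _ => by rw [sub_smul])
    rw [e, Finset.sum_attach B (fun b => c b • b), Finset.sum_attach B (fun b => d b • b), h,
      sub_self]
  intro b hb
  have := (Fintype.linearIndependent_iff.mp hBindep) (fun i => c i.1 - d i.1) h0 ⟨b, hb⟩
  simpa [sub_eq_zero] using this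

private lemma aux_tele {V : Type*} [NormedAddCommGroup V] [InnerProductSpace ℝ V]
    (u : V ≃ₗᵢ[ℝ] V) (X P : Finset V) (hPX : P ⊆ X)
    (hsplit : ∀ α ∈ X, (α ∈ P ∨ -α ∈ P) ∧ ¬(α ∈ P ∧ -α ∈ P))
    (hX : ∀ α ∈ X, u α ∈ X) :
    ((∑ α ∈ P, α) - u (∑ α ∈ P, α)
        = 2 • ∑ β ∈ (P.filter (fun α => u α ∉ P)).image (fun α => -(u α)), β)
      ∧ (P.filter (fun α => u α ∉ P)).image (fun α => -(u α)) ⊆ P := by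
  have hinj : Function.Injective u := u.injective
  set Pm := P.filter (fun α => u α ∉ P) with hPm
  set Pp := P.filter (fun α => u α ∈ P) with hPp
  set S := Pm.image (fun α => -(u α)) with hS
  set A := Pp.image (fun α => u α) with hA
  have hSsub : S ⊆ P := by
    intro β hβ
    obtain ⟨α, hα, rfl⟩ := Finset.mem_image.mp hβ
    have hαP := (Finset.mem_filter.mp hα).1
    have huα : u α ∉ P := (Finset.mem_filter.mp hα).2
    have huX : u α ∈ X := hX α (hPX hαP)
    rcases (hsplit _ huX).1 with h | h
    · exact absurd h huα
    · exact h
  have hXimg : Finset.image (fun α => u α) X = X :=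
    Finset.eq_of_subset_of_card_le
      (by intro β hβ; obtain ⟨a, ha, rfl⟩ := Finset.mem_image.mp hβ; exact hX a ha)
      (le_of_eq (Finset.card_image_of_injective _ hinj).symm)
  have hsurj : ∀ β ∈ X, ∃ α ∈ X, u α = β := by
    intro β hβ
    rw [← hXimg] at hβ
    exact Finset.mem_image.mp hβ
  have hunion : A ∪ S = P := by
    apply Finset.Subset.antisymm
    · intro β hβ
      rcases Finset.mem_union.mp hβ with h | h
      · obtain ⟨α, hα, rfl⟩ := Finset.mem_image.mp h
        exact (Finset.mem_filter.mp hα).2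
      · exact hSsub h
    · intro β hβ
      obtain ⟨α, hαX, rfl⟩ := hsurj β (hPX hβ)
      rcases (hsplit α hαX).1 with h | h
      · exact Finset.mem_union.mpr (Or.inl (Finset.mem_image.mpr
          ⟨α, Finset.mem_filter.mpr ⟨h, by assumption⟩, rfl⟩))
      · have hnegP : -(u α) ∉ P := fun hc => (hsplit (u α) (hX α hαX)).2 ⟨‹u α ∈ P›, hc⟩
        have hu : u (-α) = -(u α) := map_neg u α
        refine Finset.mem_union.mpr (Or.inr (Finset.mem_image.mpr
          ⟨-α, Finset.mem_filter.mpr ⟨h, ?_⟩, by rw [hu, neg_neg]⟩))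
        rw [hu]
        intro hc
        exact (hsplit (u α) (hX α hαX)).2 ⟨‹u α ∈ P›, by simpa using hc⟩
  have hdisj : Disjoint A S := by
    rw [Finset.disjoint_left]
    intro β hβA hβS
    obtain ⟨α₁, hα₁, e₁⟩ := Finset.mem_image.mp hβA
    obtain ⟨α₂, hα₂, e₂⟩ := Finset.mem_image.mp hβS
    have hα₁P := (Finset.mem_filter.mp hα₁).1
    have hα₂P := (Finset.mem_filter.mp hα₂).1
    have : u α₁ = u (-α₂) := by rw [map_neg]; exact e₁.trans e₂.symm
    have hα12 : α₁ = -α₂ := hinj this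
    exact (hsplit α₂ (hPX hα₂P)).2 ⟨hα₂P, hα12 ▸ hα₁P⟩
  have hinjm : ∀ x ∈ Pm, ∀ y ∈ Pm, -(u x) = -(u y) → x = y := by
    intro x _ y _ hxy
    exact hinj (neg_injective hxy)
  have hinjp : ∀ x ∈ Pp, ∀ y ∈ Pp, u x = u y → x = y := fun x _ y _ hxy => hinj hxy
  have h1 : ∑ β ∈ A, β = ∑ α ∈ Pp, u α := Finset.sum_image hinjp
  have h2 : ∑ β ∈ S, β = - ∑ α ∈ Pm, u α := by
    rw [hS, Finset.sum_image hinjm, ← Finset.sum_neg_distrib]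
  have hPsum : ∑ α ∈ P, α = ∑ α ∈ Pp, u α - ∑ α ∈ Pm, u α := by
    rw [← hunion, Finset.sum_union hdisj, h1, h2, sub_eq_add_neg]
  have huP : u (∑ α ∈ P, α) = ∑ α ∈ Pp, u α + ∑ α ∈ Pm, u α := by
    rw [map_sum]
    rw [← Finset.sum_filter_add_sum_filter_not P (fun α => u α ∈ P) (fun α => u α)]
  refine ⟨?_, hSsub⟩
  rw [huP, hPsum, h2, two_smul]
  abel

set_option maxHeartbeats 1600000 in
theorem stmt_1
    {V : Type*} [NormedAddCommGroup V] [InnerProductSpace ℝ V]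
    (R : Finset V)
    (hR0 : ∀ α ∈ R, α ≠ 0)
    (hRcrys : ∀ α ∈ R, ∀ β ∈ R, ∃ n : ℤ, 2 * ⟪β, α⟫ / ⟪α, α⟫ = (n : ℝ))
    (hRred : ∀ α ∈ R, ∀ t : ℝ, t • α ∈ R → t = 1 ∨ t = -1)
    (s : V → (V ≃ₗᵢ[ℝ] V))
    (hs : ∀ α ∈ R, ∀ x : V, s α x = x - (2 * ⟪x, α⟫ / ⟪α, α⟫) • α)
    (hRs : ∀ α ∈ R, ∀ β ∈ R, s α β ∈ R)
    (W : Subgroup (V ≃ₗᵢ[ℝ] V))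
    (hW : W = Subgroup.closure {g | ∃ α ∈ R, g = s α})
    (Rpos : Finset V) (hRposSub : Rpos ⊆ R)
    (hRsplit : ∀ α ∈ R, (α ∈ Rpos ∨ -α ∈ Rpos) ∧ ¬(α ∈ Rpos ∧ -α ∈ Rpos))
    (B : Finset V) (hBsub : B ⊆ Rpos)
    (hBindep : LinearIndependent ℝ (Subtype.val : {x : V // x ∈ B} → V))
    (hBgen : ∀ α ∈ Rpos, ∃ c : V → ℕ, α = ∑ b ∈ B, (c b : ℝ) • b)
    (B1 : Finset V) (hB1B : B1 ⊆ B)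
    (R1 : Finset V)
    (hR1 : ∀ α, α ∈ R1 ↔ α ∈ R ∧ (α : V) ∈ Submodule.span ℝ (B1 : Set V))
    (w : V ≃ₗᵢ[ℝ] V) (hwW : w ∈ W)
    (hwR1 : Finset.image (fun α => w α) R1 = R1) :
    0 ≤ ⟪(2⁻¹ : ℝ) • ∑ α ∈ R1 ∩ Rpos, α, ∑ α ∈ Rpos.filter (fun α => -(w α) ∈ Rpos), α⟫ ∧
      (⟪(2⁻¹ : ℝ) • ∑ α ∈ R1 ∩ Rpos, α, ∑ α ∈ Rpos.filter (fun α => -(w α) ∈ Rpos), α⟫ = 0 ↔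
        Finset.image (fun α => w α) B1 = B1) := by
  -- notation
  set P : Finset V := R1 ∩ Rpos with hPdef
  set Q : Finset V := Rpos.filter (fun α => -(w α) ∈ Rpos) with hQdef
  set ρ2 : V := ∑ α ∈ Rpos, α with hρ2def
  set ρ2' : V := ∑ α ∈ P, α with hρ2'def
  -- basic facts
  have hip : ∀ x : V, x ≠ 0 → (0:ℝ) < ⟪x, x⟫ :=
    fun x hx => lt_of_le_of_ne real_inner_self_nonneg (Ne.symm (inner_self_ne_zero.mpr hx))
  have hRneg : ∀ α ∈ R, -α ∈ R := by
    intro α hα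
    have hα0 : α ≠ 0 := hR0 α hα
    have h1 : s α α = -α := by
      rw [hs α hα α]
      have : (2 * ⟪α, α⟫ / ⟪α, α⟫ : ℝ) = 2 := by
        rw [mul_div_assoc, div_self (inner_self_ne_zero.mpr hα0), mul_one]
      rw [this, two_smul]
      abel
    have := hRs α hα α hα
    rwa [h1] at this
  have hnotboth : ∀ α ∈ R, ¬(α ∈ Rpos ∧ -α ∈ Rpos) := fun α hα => (hRsplit α hα).2
  have hposR : ∀ α ∈ Rpos, α ∈ R := fun α hα => hRposSub hα
  have hx0 : ∀ α ∈ Rpos, α ≠ 0 := fun α hα => hR0 α (hposR α hα)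
  -- every element of W preserves R
  have hgW : ∀ g ∈ W, ∀ α ∈ R, g α ∈ R := by
    rw [hW]
    intro g hg
    induction hg using Subgroup.closure_induction with
    | mem g hgen =>
      obtain ⟨α, hα, rfl⟩ := hgen
      exact fun β hβ => hRs α hα β hβ
    | one => intro α hα; simpa using hα
    | mul g h _ _ hgp hhp => intro α hα; exact hgp (h α) (hhp α hα)
    | inv g _ hgp =>
      intro α hα
      have himg : Finset.image (fun β => g β) R = R :=
        Finset.eq_of_subset_of_card_le
          (by intro β hβ; obtain ⟨a, ha, rfl⟩ := Finset.mem_image.mp hβ; exact hgp a ha)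
          (le_of_eq (Finset.card_image_of_injective _ g.injective).symm)
      rw [← himg] at hα
      obtain ⟨β, hβ, hgβ⟩ := Finset.mem_image.mp hα
      have : (g⁻¹ : V ≃ₗᵢ[ℝ] V) α = β := by
        show g.symm α = β
        rw [← hgβ, g.symm_apply_apply]
      rwa [this]
  have hwR : ∀ α ∈ R, w α ∈ R := hgW w hwW
  have hwsymmR : ∀ α ∈ R, w.symm α ∈ R := by
    intro α hα
    have := hgW w⁻¹ (inv_mem hwW) α hα
    exact this
  have hwR1mem : ∀ α ∈ R1, w α ∈ R1 := by
    intro α hα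
    rw [← hwR1]
    exact Finset.mem_image.mpr ⟨α, hα, rfl⟩
  have hwsymmR1 : ∀ α ∈ R1, w.symm α ∈ R1 := by
    intro α hα
    rw [← hwR1] at hα
    obtain ⟨β, hβ, hwβ⟩ := Finset.mem_image.mp hα
    have : w.symm α = β := by rw [← hwβ, w.symm_apply_apply]
    rwa [this]
  have key : ∀ c d : V → ℝ, (∑ b ∈ B, c b • b = ∑ b ∈ B, d b • b) → ∀ b ∈ B, c b = d b :=
    aux_coeff B hBindep
  have hR1neg : ∀ α ∈ R1, -α ∈ R1 := by
    intro α hα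
    rw [hR1] at hα ⊢
    exact ⟨hRneg α hα.1, neg_mem hα.2⟩
  have hR1split : ∀ α ∈ R1, (α ∈ P ∨ -α ∈ P) ∧ ¬(α ∈ P ∧ -α ∈ P) := by
    intro α hα
    have hαR : α ∈ R := ((hR1 α).mp hα).1
    constructor
    · rcases (hRsplit α hαR).1 with h | h
      · exact Or.inl (Finset.mem_inter.mpr ⟨hα, h⟩)
      · exact Or.inr (Finset.mem_inter.mpr ⟨hR1neg α hα, h⟩)
    · rintro ⟨h1, h2⟩
      exact (hRsplit α hαR).2 ⟨(Finset.mem_inter.mp h1).2, (Finset.mem_inter.mp h2).2⟩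
  have hPsub : P ⊆ Rpos := Finset.inter_subset_right
  have hPR1 : P ⊆ R1 := Finset.inter_subset_left
  -- telescoping, instance R1
  obtain ⟨t1, hS1sub⟩ := aux_tele w R1 P hPR1 hR1split hwR1mem
  set S1 : Finset V := (P.filter (fun α => w α ∉ P)).image (fun α => -(w α)) with hS1def
  -- telescoping, instance R
  obtain ⟨t2, -⟩ := aux_tele w.symm R Rpos hRposSub hRsplit hwsymmR
  have hS2Q : (Rpos.filter (fun α => w.symm α ∉ Rpos)).image (fun α => -(w.symm α)) = Q := by
    ext β
    constructor
    · intro hβ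
      obtain ⟨α, hα, rfl⟩ := Finset.mem_image.mp hβ
      have hαpos := (Finset.mem_filter.mp hα).1
      have hαnot := (Finset.mem_filter.mp hα).2
      have hsymmR : w.symm α ∈ R := hwsymmR α (hposR α hαpos)
      have hβpos : -(w.symm α) ∈ Rpos := by
        rcases (hRsplit _ hsymmR).1 with h | h
        · exact absurd h hαnot
        · exact h
      refine Finset.mem_filter.mpr ⟨hβpos, ?_⟩
      have : w (-(w.symm α)) = -α := by rw [map_neg, w.apply_symm_apply]
      rw [this, neg_neg]
      exact hαpos
    · intro hβ
      have hβpos := (Finset.mem_filter.mp hβ).1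
      have hwβ := (Finset.mem_filter.mp hβ).2
      refine Finset.mem_image.mpr ⟨-(w β), Finset.mem_filter.mpr ⟨hwβ, ?_⟩, ?_⟩
      · have : w.symm (-(w β)) = -β := by rw [map_neg, w.symm_apply_apply]
        rw [this]
        intro hc
        exact (hRsplit β (hposR β hβpos)).2 ⟨hβpos, hc⟩
      · rw [map_neg, w.symm_apply_apply, neg_neg]
  rw [hS2Q] at t2
  -- the strict dominance of ρ2
  have hρb : ∀ b ∈ B, ⟪ρ2, b⟫ = ⟪b, b⟫ := by
    intro b hbB
    have hbpos : b ∈ Rpos := hBsub hbB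
    have hbR : b ∈ R := hposR b hbpos
    have hb0 : b ≠ 0 := hx0 b hbpos
    have hbb : (⟪b, b⟫ : ℝ) ≠ 0 := inner_self_ne_zero.mpr hb0
    have hsbb : s b b = -b := by
      rw [hs b hbR b]
      have h2 : (2 * ⟪b, b⟫ / ⟪b, b⟫ : ℝ) = 2 := by
        rw [mul_div_assoc, div_self hbb, mul_one]
      rw [h2, two_smul]
      abel
    have hperm : ∀ α ∈ Rpos.erase b, s b α ∈ Rpos.erase b := by
      intro α hα
      have hαb : α ≠ b := (Finset.mem_erase.mp hα).1
      have hαpos : α ∈ Rpos := (Finset.mem_erase.mp hα).2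
      have hαR : α ∈ R := hposR α hαpos
      obtain ⟨c, hc⟩ := hBgen α hαpos
      set m : ℝ := 2 * ⟪α, b⟫ / ⟪b, b⟫ with hm
      have hsb' : s b α = α - m • b := hs b hbR α
      have hex : ∃ b' ∈ B, b' ≠ b ∧ c b' ≠ 0 := by
        by_contra hall
        push_neg at hall
        have hαeq : α = (c b : ℝ) • b := by
          rw [hc, Finset.sum_eq_single_of_mem b hbB]
          intro x hx hxb
          rw [hall x hx hxb]
          simp
        have hmem : (c b : ℝ) • b ∈ R := hαeq ▸ hαR
        rcases hRred b hbR (c b : ℝ) hmem with h1 | h1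
        · exact hαb (by rw [hαeq, h1, one_smul])
        · have : (0:ℝ) ≤ (c b : ℝ) := Nat.cast_nonneg _
          linarith [this, h1.ge, h1.le]
      have hspos : s b α ∈ Rpos := by
        rcases (hRsplit _ (hRs b hbR α hαR)).1 with h | h
        · exact h
        · exfalso
          obtain ⟨d, hd⟩ := hBgen _ h
          have hsum : ∑ x ∈ B, ((d x : ℝ) + (c x : ℝ)) • x
              = ∑ x ∈ B, (if x = b then m else (0:ℝ)) • x := by
            have lhs : ∑ x ∈ B, ((d x : ℝ) + (c x : ℝ)) • x = (-(s b α)) + α := by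
              rw [Finset.sum_congr rfl (fun x _ => add_smul (d x : ℝ) (c x : ℝ) x),
                Finset.sum_add_distrib, ← hd, ← hc]
            have rhs : ∑ x ∈ B, (if x = b then m else (0:ℝ)) • x = m • b := by
              rw [Finset.sum_eq_single_of_mem b hbB]
              · rw [if_pos rfl]
              · intro x hx hxb
                rw [if_neg hxb, zero_smul]
            rw [lhs, rhs, hsb']
            abel
          obtain ⟨b', hb', hb'b, hcb'⟩ := hex
          have h1 := key _ _ hsum b' hb'
          rw [if_neg hb'b] at h1
          have hd0 : (0:ℝ) ≤ (d b' : ℝ) := Nat.cast_nonneg _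
          have hc0 : (0:ℝ) ≤ (c b' : ℝ) := Nat.cast_nonneg _
          have : (c b' : ℝ) = 0 := by linarith
          exact hcb' (by exact_mod_cast this)
      have hsnb : s b α ≠ b := by
        intro hceq
        have hval : α = (1 + m) • b := by
          have h1 : α - m • b = b := by rw [← hsb', hceq]
          have h2 : α = b + m • b := sub_eq_iff_eq_add.mp h1
          rw [h2, add_smul, one_smul]
        have hmem : (1 + m) • b ∈ R := hval ▸ hαR
        rcases hRred b hbR (1 + m) hmem with h1 | h1
        · exact hαb (by rw [hval, h1, one_smul])
        · have hαneg : α = -b := by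
            rw [hval, h1]
            simp
          exact hnotboth α hαR ⟨hαpos, by rw [hαneg, neg_neg]; exact hbpos⟩
      exact Finset.mem_erase.mpr ⟨hsnb, hspos⟩
    have himg : Finset.image (fun α => s b α) (Rpos.erase b) = Rpos.erase b :=
      Finset.eq_of_subset_of_card_le
        (by intro β hβ; obtain ⟨a, ha, rfl⟩ := Finset.mem_image.mp hβ; exact hperm a ha)
        (le_of_eq (Finset.card_image_of_injective _ (s b).injective).symm)
    have hsum_erase : ∑ α ∈ Rpos.erase b, s b α = ∑ α ∈ Rpos.erase b, α := by
      conv_rhs => rw [← himg]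
      rw [Finset.sum_image (fun x _ y _ h => (s b).injective h)]
    have hsρ : s b ρ2 = ρ2 - (2:ℝ) • b := by
      have e0 : s b ρ2 = ∑ α ∈ Rpos, s b α := map_sum (s b) _ _
      have e1 : ∑ α ∈ Rpos, s b α = s b b + ∑ α ∈ Rpos.erase b, s b α :=
        (Finset.add_sum_erase _ _ hbpos).symm
      have e2 : ∑ α ∈ Rpos, (α : V) = b + ∑ α ∈ Rpos.erase b, α :=
        (Finset.add_sum_erase _ (fun α => α) hbpos).symm
      rw [e0, e1, hsbb, hsum_erase, hρ2def, e2, two_smul]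
      abel
    have heq := hs b hbR ρ2
    rw [hsρ] at heq
    have h3 : (2:ℝ) • b = (2 * ⟪ρ2, b⟫ / ⟪b, b⟫ : ℝ) • b := sub_right_injective heq
    have h4 : (2:ℝ) = 2 * ⟪ρ2, b⟫ / ⟪b, b⟫ := smul_left_injective ℝ hb0 h3
    field_simp at h4
    linarith
  have hdom : ∀ β ∈ Rpos, 0 < ⟪β, ρ2⟫ := by
    intro β hβ
    obtain ⟨c, hc⟩ := hBgen β hβ
    have hrw : ⟪β, ρ2⟫ = ∑ b ∈ B, (c b : ℝ) * ⟪b, b⟫ := by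
      rw [hc, sum_inner]
      refine Finset.sum_congr rfl (fun b hb => ?_)
      rw [real_inner_smul_left, real_inner_comm, hρb b hb]
    rw [hrw]
    have hex : ∃ b ∈ B, c b ≠ 0 := by
      by_contra hall
      push_neg at hall
      apply hx0 β hβ
      rw [hc]
      refine Finset.sum_eq_zero (fun b hb => ?_)
      rw [hall b hb]
      simp
    obtain ⟨b, hb, hcb⟩ := hex
    refine Finset.sum_pos' (fun x hx => ?_) ⟨b, hb, ?_⟩
    · have : (0:ℝ) ≤ ⟪x, x⟫ := real_inner_self_nonneg
      positivity
    · have hbB : b ∈ Rpos := hBsub hb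
      have hb0 : b ≠ 0 := hx0 b hbB
      have h1 : (0:ℝ) < ⟪b, b⟫ := hip b hb0
      have h2 : (0:ℝ) < (c b : ℝ) := by
        have := Nat.pos_of_ne_zero hcb
        exact_mod_cast this
      positivity
  -- the central computation
  have hT : ⟪ρ2', ∑ α ∈ Q, α⟫ = ∑ β ∈ S1, ⟪β, ρ2⟫ := by
    have e2 : (∑ α ∈ Q, α) + (∑ α ∈ Q, α) = ρ2 - w.symm ρ2 := by
      rw [t2, two_smul]
    have e1 : ρ2' - w ρ2' = (∑ β ∈ S1, β) + (∑ β ∈ S1, β) := by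
      rw [t1, two_smul]
    have h3 : ⟪ρ2', w.symm ρ2⟫ = ⟪w ρ2', ρ2⟫ := by
      rw [← w.inner_map_map ρ2' (w.symm ρ2), w.apply_symm_apply]
    have h4 : ⟪ρ2', ∑ α ∈ Q, α⟫ + ⟪ρ2', ∑ α ∈ Q, α⟫ = ⟪ρ2' - w ρ2', ρ2⟫ := by
      rw [← inner_add_right, e2, inner_sub_right, inner_sub_left, h3]
    have h5 : ⟪ρ2' - w ρ2', ρ2⟫ = (∑ β ∈ S1, ⟪β, ρ2⟫) + ∑ β ∈ S1, ⟪β, ρ2⟫ := by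
      rw [e1, inner_add_left, sum_inner]
    linarith [h4, h5]
  have hQpos : ∀ β ∈ S1, 0 < ⟪β, ρ2⟫ := fun β hβ => hdom β (hPsub (hS1sub hβ))
  have hsmul : ⟪(2⁻¹ : ℝ) • ρ2', ∑ α ∈ Q, α⟫ = 2⁻¹ * ∑ β ∈ S1, ⟪β, ρ2⟫ := by
    rw [real_inner_smul_left, hT]
  have hTnonneg : (0:ℝ) ≤ ∑ β ∈ S1, ⟪β, ρ2⟫ :=
    Finset.sum_nonneg (fun β hβ => le_of_lt (hQpos β hβ))
  -- the equality criterion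
  have hrepP : ∀ α ∈ P, ∃ c : V → ℕ, (∀ b ∈ B, b ∉ B1 → c b = 0)
      ∧ α = ∑ b ∈ B, (c b : ℝ) • b ∧ α = ∑ b ∈ B1, (c b : ℝ) • b := by
    intro α hα
    have hαpos : α ∈ Rpos := hPsub hα
    have hαR1 : α ∈ R1 := hPR1 hα
    have hspan : α ∈ Submodule.span ℝ (B1 : Set V) := ((hR1 α).mp hαR1).2
    obtain ⟨c, hc⟩ := hBgen α hαpos
    obtain ⟨f, -, hf⟩ := Submodule.mem_span_finset.mp hspan
    have hfeB : ∑ x ∈ B, (if x ∈ B1 then f x else 0) • x = α := by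
      have h1 : ∑ x ∈ B1, (if x ∈ B1 then f x else 0) • x
          = ∑ x ∈ B, (if x ∈ B1 then f x else 0) • x :=
        Finset.sum_subset hB1B (fun x _ hx1 => by rw [if_neg hx1, zero_smul])
      rw [← h1, ← hf]
      exact Finset.sum_congr rfl (fun x hx => by rw [if_pos hx])
    have hco := key (fun x => (c x : ℝ)) (fun x => if x ∈ B1 then f x else 0)
      (by rw [← hc, hfeB])
    refine ⟨c, ?_, hc, ?_⟩
    · intro b hb hb1
      have h0 := hco b hb
      simp only [if_neg hb1] at h0
      exact_mod_cast h0
    · rw [hc]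
      refine (Finset.sum_subset hB1B (fun x hx hx1 => ?_)).symm
      have h0 := hco x hx
      simp only [if_neg hx1] at h0
      rw [h0, zero_smul]
  have hNiff : P.filter (fun α => w α ∉ P) = ∅ ↔ Finset.image (fun α => w α) B1 = B1 := by
    constructor
    · intro hN
      have hwP : ∀ α ∈ P, w α ∈ P := by
        intro α hα
        by_contra hcon
        have : α ∈ P.filter (fun α => w α ∉ P) := Finset.mem_filter.mpr ⟨hα, hcon⟩
        rw [hN] at this
        exact absurd this (Finset.notMem_empty α)
      have himgP : Finset.image (fun α => w α) P = P :=
        Finset.eq_of_subset_of_card_le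
          (by intro β hβ; obtain ⟨a, ha, rfl⟩ := Finset.mem_image.mp hβ; exact hwP a ha)
          (le_of_eq (Finset.card_image_of_injective _ w.injective).symm)
      have hwsymmP : ∀ β ∈ P, w.symm β ∈ P := by
        intro β hβ
        rw [← himgP] at hβ
        obtain ⟨a, ha, haeq⟩ := Finset.mem_image.mp hβ
        have : w.symm β = a := by rw [← haeq, w.symm_apply_apply]
        rwa [this]
      -- simple roots are indecomposable in Rpos
      have hindec : ∀ b ∈ B, ∀ β ∈ Rpos, ∀ γ ∈ Rpos, b ≠ β + γ := by
        intro b hb β hβ γ hγ hbeq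
        obtain ⟨cc, hcc⟩ := hBgen β hβ
        obtain ⟨dd, hdd⟩ := hBgen γ hγ
        have hsum : ∑ x ∈ B, ((cc x : ℝ) + (dd x : ℝ)) • x
            = ∑ x ∈ B, (if x = b then (1:ℝ) else 0) • x := by
          have lhs : ∑ x ∈ B, ((cc x : ℝ) + (dd x : ℝ)) • x = β + γ := by
            rw [Finset.sum_congr rfl (fun x _ => add_smul (cc x : ℝ) (dd x : ℝ) x),
              Finset.sum_add_distrib, ← hcc, ← hdd]
          have rhs : ∑ x ∈ B, (if x = b then (1:ℝ) else 0) • x = b := by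
            rw [Finset.sum_eq_single_of_mem b hb]
            · rw [if_pos rfl, one_smul]
            · intro x _ hxb
              rw [if_neg hxb, zero_smul]
          rw [lhs, rhs, ← hbeq]
        have hco := key _ _ hsum
        have h1 := hco b hb
        simp only [if_pos rfl] at h1
        have hn1 : cc b + dd b = 1 := by exact_mod_cast h1
        have hzc : ∀ x ∈ B, x ≠ b → cc x = 0 ∧ dd x = 0 := by
          intro x hx hxb
          have h2 := hco x hx
          simp only [if_neg hxb] at h2
          have : cc x + dd x = 0 := by exact_mod_cast h2
          omega
        rcases (by omega : cc b = 0 ∨ dd b = 0) with h | h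
        · apply hx0 β hβ
          rw [hcc]
          refine Finset.sum_eq_zero (fun x hx => ?_)
          rcases eq_or_ne x b with rfl | hxb
          · rw [h]; simp
          · rw [(hzc x hx hxb).1]; simp
        · apply hx0 γ hγ
          rw [hdd]
          refine Finset.sum_eq_zero (fun x hx => ?_)
          rcases eq_or_ne x b with rfl | hxb
          · rw [h]; simp
          · rw [(hzc x hx hxb).2]; simp
      -- every non-simple element of P is decomposable
      have hdecomp : ∀ γ ∈ P, γ ∉ B1 → ∃ β ∈ P, ∃ δ ∈ P, γ = β + δ := by
        intro γ hγP hγB1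
        obtain ⟨c, hcz, hcB, hcB1⟩ := hrepP γ hγP
        have hγpos : γ ∈ Rpos := hPsub hγP
        have hγR : γ ∈ R := hposR γ hγpos
        have hγ0 : γ ≠ 0 := hx0 γ hγpos
        have hγγ : (0:ℝ) < ⟪γ, γ⟫ := hip γ hγ0
        have h0 : ⟪γ, ∑ b ∈ B1, (c b : ℝ) • b⟫ = ∑ b ∈ B1, (c b : ℝ) * ⟪γ, b⟫ := by
          rw [inner_sum]
          exact Finset.sum_congr rfl (fun b _ => real_inner_smul_right γ b ((c b : ℝ)))
        have hsum : ⟪γ, γ⟫ = ∑ b ∈ B1, (c b : ℝ) * ⟪γ, b⟫ := by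
          rw [← h0, ← hcB1]
        obtain ⟨a, ha, hpa⟩ : ∃ a ∈ B1, (0:ℝ) < (c a : ℝ) * ⟪γ, a⟫ := by
          by_contra hall
          push_neg at hall
          have hle : ∑ b ∈ B1, (c b : ℝ) * ⟪γ, b⟫ ≤ 0 := Finset.sum_nonpos hall
          linarith [hsum ▸ hγγ]
        have haB : a ∈ B := hB1B ha
        have hapos : a ∈ Rpos := hBsub haB
        have haR : a ∈ R := hposR a hapos
        have ha0 : a ≠ 0 := hx0 a hapos
        have haa : (0:ℝ) < ⟪a, a⟫ := hip a ha0
        have haP : a ∈ P := Finset.mem_inter.mpr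
          ⟨(hR1 a).mpr ⟨haR, Submodule.subset_span (Finset.mem_coe.mpr ha)⟩, hapos⟩
        have hca : c a ≠ 0 := by
          intro h
          rw [h] at hpa
          simp at hpa
        have hga : (0:ℝ) < ⟪γ, a⟫ := by
          rcases lt_or_ge 0 ⟪γ, a⟫ with h | h
          · exact h
          · exfalso
            nlinarith [hpa, h, (Nat.cast_nonneg (c a) : (0:ℝ) ≤ (c a : ℝ))]
        have hγa : γ ≠ a := fun h => hγB1 (h ▸ ha)
        have hdiffR : γ - a ∈ R := by
          obtain ⟨k, hk⟩ := hRcrys a haR γ hγR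
          obtain ⟨l, hl⟩ := hRcrys γ hγR a haR
          have hk1 : (1:ℤ) ≤ k := by
            have hkpos : (0:ℝ) < (k:ℝ) := by
              rw [← hk]
              exact div_pos (by linarith) haa
            have : (0:ℤ) < k := by exact_mod_cast hkpos
            omega
          have hl1 : (1:ℤ) ≤ l := by
            have hlpos : (0:ℝ) < (l:ℝ) := by
              rw [← hl]
              refine div_pos ?_ hγγ
              rw [real_inner_comm γ a]
              linarith
            have : (0:ℤ) < l := by exact_mod_cast hlpos
            omega
          rcases eq_or_lt_of_le hk1 with hk1e | hk2
          · have hse : s a γ = γ - a := by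
              rw [hs a haR γ, hk, ← hk1e]
              push_cast
              rw [one_smul]
            exact hse ▸ hRs a haR γ hγR
          rcases eq_or_lt_of_le hl1 with hl1e | hl2
          · have hse : s γ a = a - γ := by
              rw [hs γ hγR a, hl, ← hl1e]
              push_cast
              rw [one_smul]
            have h2 : a - γ ∈ R := hse ▸ hRs γ hγR a haR
            have h3 := hRneg _ h2
            rwa [neg_sub] at h3
          · exfalso
            have hcs := real_inner_mul_inner_self_le γ a
            have hklr : (k:ℝ) * (l:ℝ) ≤ 4 := by
              rw [← hk, ← hl, real_inner_comm γ a, div_mul_div_comm,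
                div_le_iff₀ (by positivity)]
              nlinarith [hcs]
            have hkl : k * l ≤ 4 := by exact_mod_cast hklr
            have hk2le : k ≤ 2 := by nlinarith
            have hl2le : l ≤ 2 := by nlinarith
            have hk2' : k = 2 := by omega
            have hl2' : l = 2 := by omega
            have e1 : ⟪γ, a⟫ = ⟪a, a⟫ := by
              have h := hk
              rw [hk2'] at h
              push_cast at h
              field_simp [ne_of_gt haa] at h
              linarith
            have e2 : ⟪a, γ⟫ = ⟪γ, γ⟫ := by
              have h := hl
              rw [hl2'] at h
              push_cast at h
              field_simp [ne_of_gt hγγ] at h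
              linarith
            have e3 : ⟪γ - a, γ - a⟫ = 0 := by
              rw [inner_sub_left, inner_sub_right, inner_sub_right]
              have e4 : ⟪a, γ⟫ = ⟪γ, a⟫ := real_inner_comm γ a
              linarith
            have e5 : γ - a = 0 := inner_self_eq_zero.mp e3
            exact hγa (sub_eq_zero.mp e5)
        have hdR1 : γ - a ∈ R1 := (hR1 _).mpr
          ⟨hdiffR, sub_mem ((hR1 γ).mp (hPR1 hγP)).2
            (Submodule.subset_span (Finset.mem_coe.mpr ha))⟩
        rcases (hRsplit _ hdiffR).1 with hpos | hneg
        · exact ⟨γ - a, Finset.mem_inter.mpr ⟨hdR1, hpos⟩, a, haP, by abel⟩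
        · exfalso
          rw [neg_sub] at hneg
          obtain ⟨e, he⟩ := hBgen _ hneg
          have hsum2 : ∑ x ∈ B, ((e x : ℝ) + (c x : ℝ)) • x
              = ∑ x ∈ B, (if x = a then (1:ℝ) else 0) • x := by
            have lhs : ∑ x ∈ B, ((e x : ℝ) + (c x : ℝ)) • x = (a - γ) + γ := by
              rw [Finset.sum_congr rfl (fun x _ => add_smul (e x : ℝ) (c x : ℝ) x),
                Finset.sum_add_distrib, ← he, ← hcB]
            have rhs : ∑ x ∈ B, (if x = a then (1:ℝ) else 0) • x = a := by
              rw [Finset.sum_eq_single_of_mem a haB]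
              · rw [if_pos rfl, one_smul]
              · intro x _ hxa
                rw [if_neg hxa, zero_smul]
            rw [lhs, rhs]
            abel
          have hco := key _ _ hsum2
          have h1 := hco a haB
          simp only [if_pos rfl] at h1
          have hea : e a + c a = 1 := by exact_mod_cast h1
          have hzero : ∀ x ∈ B, x ≠ a → c x = 0 := by
            intro x hx hxa
            have h2 := hco x hx
            simp only [if_neg hxa] at h2
            have : e x + c x = 0 := by exact_mod_cast h2
            omega
          have hγeq : γ = a := by
            rw [hcB, Finset.sum_eq_single_of_mem a haB]
            · rw [(by omega : c a = 1)]
              norm_num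
            · intro x hx hxa
              rw [hzero x hx hxa]
              simp
          exact hγa hγeq
      -- conclude : w maps B1 into B1
      have himgB1 : Finset.image (fun α => w α) B1 ⊆ B1 := by
        intro β hβ
        obtain ⟨b, hb, rfl⟩ := Finset.mem_image.mp hβ
        have hbP : b ∈ P := Finset.mem_inter.mpr
          ⟨(hR1 b).mpr ⟨hposR b (hBsub (hB1B hb)),
            Submodule.subset_span (Finset.mem_coe.mpr hb)⟩, hBsub (hB1B hb)⟩
        have hwbP : w b ∈ P := hwP b hbP
        by_contra hwb1
        obtain ⟨β, hβP, δ, hδP, heq⟩ := hdecomp (w b) hwbP hwb1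
        have hb' : b = w.symm β + w.symm δ := by
          have h2 : w.symm (w b) = w.symm (β + δ) := congrArg _ heq
          rwa [w.symm_apply_apply, map_add] at h2
        exact hindec b (hB1B hb) (w.symm β) (hPsub (hwsymmP β hβP))
          (w.symm δ) (hPsub (hwsymmP δ hδP)) hb'
      exact Finset.eq_of_subset_of_card_le himgB1
        (le_of_eq (Finset.card_image_of_injective _ w.injective).symm)
    · intro hB
      rw [Finset.filter_eq_empty_iff]
      intro α hα
      rw [not_not]
      obtain ⟨c, _, _, hcB1⟩ := hrepP α hα
      have hwα1 : w α ∈ R1 := hwR1mem α (hPR1 hα)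
      have hwαR : w α ∈ R := ((hR1 _).mp hwα1).1
      have h1 : w α = ∑ b ∈ B1, (c b : ℝ) • w b := by
        rw [hcB1, map_sum]
        exact Finset.sum_congr rfl (fun b _ => by rw [map_smul])
      have h2 : ∑ b ∈ B1, (c b : ℝ) • w b = ∑ x ∈ B1, (c (w.symm x) : ℝ) • x := by
        conv_rhs => rw [← hB]
        rw [Finset.sum_image (fun x _ y _ h => w.injective h)]
        exact Finset.sum_congr rfl (fun b _ => by rw [w.symm_apply_apply])
      have hwαpos : w α ∈ Rpos := by
        by_contra hnp
        have hneg : -(w α) ∈ Rpos := by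
          rcases (hRsplit _ hwαR).1 with h | h
          · exact absurd h hnp
          · exact h
        obtain ⟨d, hd⟩ := hBgen _ hneg
        have h3 : w α = ∑ x ∈ B, (if x ∈ B1 then (c (w.symm x) : ℝ) else 0) • x := by
          have hh : ∑ x ∈ B1, (if x ∈ B1 then (c (w.symm x) : ℝ) else 0) • x
              = ∑ x ∈ B, (if x ∈ B1 then (c (w.symm x) : ℝ) else 0) • x :=
            Finset.sum_subset hB1B (fun x _ hx1 => by rw [if_neg hx1, zero_smul])
          rw [h1, h2, ← hh]
          exact Finset.sum_congr rfl (fun x hx => by rw [if_pos hx])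
        have hsum3 : ∑ x ∈ B, ((if x ∈ B1 then (c (w.symm x) : ℝ) else 0) + (d x : ℝ)) • x
            = ∑ x ∈ B, (0:ℝ) • x := by
          have lhs : ∑ x ∈ B, ((if x ∈ B1 then (c (w.symm x) : ℝ) else 0) + (d x : ℝ)) • x
              = w α + -(w α) := by
            rw [Finset.sum_congr rfl (fun x _ => add_smul _ ((d x : ℝ)) x),
              Finset.sum_add_distrib, ← hd, ← h3]
          rw [lhs]
          simp
        have hco := key _ _ hsum3
        have hzz : ∀ x ∈ B1, (c (w.symm x) : ℝ) = 0 := by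
          intro x hx
          have h4 := hco x (hB1B hx)
          simp only [if_pos hx] at h4
          have h5 : (0:ℝ) ≤ (c (w.symm x) : ℝ) := Nat.cast_nonneg _
          have h6 : (0:ℝ) ≤ (d x : ℝ) := Nat.cast_nonneg _
          linarith
        have : w α = 0 := by
          rw [h1, h2]
          exact Finset.sum_eq_zero (fun x hx => by rw [hzz x hx, zero_smul])
        exact hR0 _ hwαR this
      exact Finset.mem_inter.mpr ⟨hwα1, hwαpos⟩
  constructor
  · rw [hsmul]
    positivity
  · rw [hsmul]
    constructor
    · intro h
      have hT0 : ∑ β ∈ S1, ⟪β, ρ2⟫ = 0 := by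
        rcases mul_eq_zero.mp h with h' | h'
        · norm_num at h'
        · exact h'
      have hS1empty : S1 = ∅ := by
        by_contra hne
        have := Finset.sum_pos hQpos (Finset.nonempty_of_ne_empty hne)
        linarith
      rw [hS1def, Finset.image_eq_empty] at hS1empty
      exact hNiff.mp hS1empty
    · intro h
      have hfilt : P.filter (fun α => w α ∉ P) = ∅ := hNiff.mpr h
      have : S1 = ∅ := by rw [hS1def, hfilt, Finset.image_empty]
      rw [this, Finset.sum_empty, mul_zero]
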